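/- If the total effect of A on Y is not identified in MPDAG G (i.e., some proper possibly causal path from A to Y starts with an undirected edge), then there exists a shortest such path, and any shortest such path p = <A1, V1, ..., Y1> has the property that any edge in G between A1 and an interior node Vi (2 <= i <= k) is directed A1 -> Vi. -/

import Mathlib

/-- A partially directed graph: directed edges `dir` and undirected edges `undir`. -/
structure PDAG (V : Type) where
  dir : V → V → Prop
  undir : V → V → Prop
  undir_symm : ∀ a b, undir a b → undir b a

namespace PDAG

variable {V : Type}

/-- Two nodes are adjacent if joined by a directed or undirected edge. -/
def adj (G : PDAG V) (a b : V) : Prop := G.dir a b ∨ G.dir b a ∨ G.undir a b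

/-- Each pair of nodes is joined by at most one edge, and no self loops. -/
def Wellformed (G : PDAG V) : Prop :=
  (∀ a b, ¬ (G.dir a b ∧ G.dir b a)) ∧ (∀ a b, ¬ (G.dir a b ∧ G.undir a b)) ∧
  (∀ a, ¬ G.undir a a)

/-- No directed cycles. -/
def Acyclic (G : PDAG V) : Prop := ∀ a, ¬ Relation.TransGen G.dir a a

/-- Closure under Meek's orientation rules R1–R4. -/
def MeekClosed (G : PDAG V) : Prop :=
  (∀ a b c, G.dir a b → G.undir b c → ¬ G.adj a c → G.dir b c) ∧
  (∀ a b c, G.dir a c → G.dir c b → G.undir a b → G.dir a b) ∧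
  (∀ a b c d, G.undir a b → G.undir a c → G.undir a d → G.dir c b → G.dir d b →
    ¬ G.adj c d → G.dir a b) ∧
  (∀ a b c d, G.undir d a → G.undir d b → G.undir d c → G.dir a b → G.dir b c →
    ¬ G.adj a c → G.dir d c)

/-- A maximally oriented PDAG. -/
def IsMPDAG (G : PDAG V) : Prop := G.Wellformed ∧ G.Acyclic ∧ G.MeekClosed

/-- A DAG: acyclic, no undirected edges. -/
def IsDAG (G : PDAG V) : Prop := G.Wellformed ∧ G.Acyclic ∧ ∀ a b, ¬ G.undir a b

/-- A path: at least two distinct nodes, consecutive ones adjacent. -/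
def IsPath (G : PDAG V) (p : List V) : Prop :=
  2 ≤ p.length ∧ p.Nodup ∧ List.Chain' G.adj p

/-- Possibly causal path: no edge `Vi ← Vj` in `G` for `i < j` among the path's nodes. -/
def PossiblyCausal (G : PDAG V) (p : List V) : Prop :=
  p.Pairwise (fun a b => ¬ G.dir b a)

/-- Causal path: every consecutive edge directed forwards. -/
def Causal (G : PDAG V) (p : List V) : Prop := List.Chain' G.dir p

/-- Unshielded path: endpoints of every consecutive triple are nonadjacent. -/
def Unshielded (G : PDAG V) (p : List V) : Prop :=
  ∀ a b c, [a, b, c] <:+: p → ¬ G.adj a c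

/-- Proper path w.r.t. `A`: only the first node is in `A`. -/
def ProperFrom (A : Set V) (p : List V) : Prop :=
  ∃ a t, p = a :: t ∧ a ∈ A ∧ ∀ x ∈ t, x ∉ A

/-- The path ends in the set `Y`. -/
def EndsIn (p : List V) (Y : Set V) : Prop := ∃ y, p.getLast? = some y ∧ y ∈ Y

/-- The path starts with an undirected edge. -/
def StartsUndir (G : PDAG V) (p : List V) : Prop :=
  ∃ a b t, p = a :: b :: t ∧ G.undir a b

/-- The path starts with a directed edge. -/
def StartsDir (G : PDAG V) (p : List V) : Prop :=
  ∃ a b t, p = a :: b :: t ∧ G.dir a b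

/-- A proper possibly causal path from `A` to `Y`. -/
def PPCPath (G : PDAG V) (A Y : Set V) (p : List V) : Prop :=
  G.IsPath p ∧ G.PossiblyCausal p ∧ ProperFrom A p ∧ EndsIn p Y

/-- Perković's identifiability condition: every proper possibly causal path from `A`
to `Y` starts with a directed edge. -/
def IdCond (G : PDAG V) (A Y : Set V) : Prop :=
  ∀ p, G.PPCPath A Y p → G.StartsDir p

/-- A violating path: proper possibly causal from `A` to `Y` starting with an
undirected edge. -/
def ViolPath (G : PDAG V) (A Y : Set V) (p : List V) : Prop :=
  G.PPCPath A Y p ∧ G.StartsUndir p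

/-- A shortest violating path. -/
def ShortestViol (G : PDAG V) (A Y : Set V) (p : List V) : Prop :=
  G.ViolPath A Y p ∧ ∀ q, G.ViolPath A Y q → p.length ≤ q.length

/-- Same adjacencies. -/
def SameAdj (G' G : PDAG V) : Prop := ∀ a b, G'.adj a b ↔ G.adj a b

/-- Same unshielded colliders. -/
def SameUC (G' G : PDAG V) : Prop :=
  ∀ a b c, (G'.dir a b ∧ G'.dir c b ∧ ¬ G'.adj a c) ↔
    (G.dir a b ∧ G.dir c b ∧ ¬ G.adj a c)

/-- `G'` is represented by `G`: same adjacencies, same unshielded colliders, and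
every directed edge of `G` appears in `G'`. -/
def RepresentedBy (G' G : PDAG V) : Prop :=
  SameAdj G' G ∧ SameUC G' G ∧ ∀ a b, G.dir a b → G'.dir a b

/-- `G1 = MPDAG(G, {A1 → V1})`: the least maximally oriented graph represented by `G`
containing the orientation `A1 → V1`. -/
def IsOrientClosure (G : PDAG V) (A1 V1 : V) (G1 : PDAG V) : Prop :=
  G1.IsMPDAG ∧ RepresentedBy G1 G ∧ G1.dir A1 V1 ∧
  (∀ a b, G1.undir a b ↔ (G.adj a b ∧ ¬ G1.dir a b ∧ ¬ G1.dir b a)) ∧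
  (∀ H : PDAG V, H.IsMPDAG → RepresentedBy H G → H.dir A1 V1 →
    ∀ a b, G1.dir a b → H.dir a b)

end PDAG

/-- If the total effect of `A` on `Y` is not identified in MPDAG `G`, then a shortest
proper possibly causal path from `A` to `Y` starting with an undirected edge exists,
and along any such shortest path `p = ⟨A1, V1, …, Y1⟩`, any edge of `G` between `A1`
and a node `Vi` of `p` with `i ≥ 2` is directed `A1 → Vi`. -/
theorem stmt18 {V : Type} (G : PDAG V) (hG : G.IsMPDAG) (A Y : Set V)
    (hAY : Disjoint A Y) (hnid : ¬ G.IdCond A Y) :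
    (∃ p, G.ShortestViol A Y p) ∧
    ∀ p A1 V1 t, p = A1 :: V1 :: t → G.ShortestViol A Y p →
      ∀ i w, 2 ≤ i → p[i]? = some w → G.adj A1 w → G.dir A1 w := by
  classical
  have hviol : ∃ p, G.ViolPath A Y p := by
    rw [PDAG.IdCond] at hnid
    push_neg at hnid
    obtain ⟨p, hp, hnd⟩ := hnid
    refine ⟨p, hp, ?_⟩
    obtain ⟨⟨hlen, hnodup, hchain⟩, hpc, hprop, hend⟩ := hp
    obtain ⟨a, b, t, rfl⟩ : ∃ a b t, p = a :: b :: t := by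
      match p with
      | a :: b :: t => exact ⟨a, b, t, rfl⟩
      | [] => simp at hlen
      | [a] => simp at hlen
    have hadj : G.adj a b := (List.isChain_cons_cons.mp hchain).1
    rcases hadj with h | h | h
    · exact absurd ⟨a, b, t, rfl, h⟩ hnd
    · exact absurd h ((List.pairwise_cons.mp hpc).1 b (by simp))
    · exact ⟨a, b, t, rfl, h⟩
  have hex : ∃ p, G.ShortestViol A Y p := by
    obtain ⟨p0, hp0⟩ := hviol
    obtain ⟨n, ⟨p, hp, rfl⟩, hmin⟩ :=
      Nat.lt_wfRel.wf.has_min {n | ∃ p, G.ViolPath A Y p ∧ p.length = n}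
        ⟨p0.length, p0, hp0, rfl⟩
    refine ⟨p, hp, fun q hq => ?_⟩
    by_contra hlt
    refine hmin q.length ⟨q, hq, rfl⟩ ?_
    show q.length < p.length
    omega
  refine ⟨hex, ?_⟩
  rintro p A1 V1 t rfl hps i w hi hiw hadj
  obtain ⟨⟨⟨⟨hlen, hnodup, hchain⟩, hpc, hprop, hend⟩, hsu⟩, hmin⟩ := hps
  obtain ⟨j, rfl⟩ : ∃ j, i = j + 2 := ⟨i - 2, by omega⟩
  have hjw : t[j]? = some w := by simpa using hiw
  obtain ⟨hjlt, hjel⟩ := List.getElem?_eq_some_iff.mp hjw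
  have hdt : t.drop j = w :: t.drop (j + 1) := by
    rw [List.drop_eq_getElem_cons hjlt, hjel]
  have hdropsub : ∀ x ∈ t.drop j, x ∈ t := fun x hx => (List.drop_sublist j t).subset hx
  have hwt : w ∈ t := hdropsub w (by rw [hdt]; exact List.mem_cons_self)
  have hA1rel : ∀ x ∈ V1 :: t, ¬ G.dir x A1 := (List.pairwise_cons.mp hpc).1
  rcases hadj with h | h | h
  · exact h
  · exact absurd h (hA1rel w (by simp [hwt]))
  exfalso
  obtain ⟨a, t', heq, haA, ht'⟩ := hprop
  obtain ⟨rfl, rfl⟩ := List.cons_eq_cons.mp heq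
  have hqviol : G.PPCPath A Y (A1 :: t.drop j) := by
    refine ⟨⟨?_, ?_, ?_⟩, ?_, ?_, ?_⟩
    · rw [hdt]; simp
    · refine List.nodup_cons.mpr ⟨?_, hnodup.of_cons.of_cons.sublist (List.drop_sublist j t)⟩
      intro hmem
      exact (List.nodup_cons.mp hnodup).1 (by simp [hdropsub _ hmem])
    · show List.Chain' G.adj (A1 :: t.drop j)
      rw [hdt]
      refine List.isChain_cons_cons.mpr ⟨Or.inr (Or.inr h), ?_⟩
      rw [← hdt]
      have ht : List.Chain' G.adj t := ((List.isChain_cons_cons.mp hchain).2).tail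
      exact ht.drop j
    · show List.Pairwise (fun a b => ¬ G.dir b a) (A1 :: t.drop j)
      refine List.pairwise_cons.mpr ⟨fun x hx => hA1rel x (by simp [hdropsub _ hx]), ?_⟩
      exact (hpc.of_cons.of_cons).sublist (List.drop_sublist j t)
    · exact ⟨A1, t.drop j, rfl, haA, fun x hx => ht' x (by simp [hdropsub _ hx])⟩
    · obtain ⟨y, hy, hyY⟩ := hend
      refine ⟨y, ?_, hyY⟩
      have hne : t.drop j ≠ [] := by rw [hdt]; simp
      have hy2 : (t.drop j).getLast? = some y := by
        rw [← List.getLast?_append_of_ne_nil (A1 :: V1 :: t.take j) hne]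
        have hsplit : (A1 :: V1 :: t.take j) ++ t.drop j = A1 :: V1 :: t := by
          simp [List.take_append_drop]
        rw [hsplit]; exact hy
      rw [show (A1 :: t.drop j) = [A1] ++ t.drop j from rfl,
        List.getLast?_append_of_ne_nil _ hne]
      exact hy2
  have hqsu : G.StartsUndir (A1 :: t.drop j) := ⟨A1, w, t.drop (j + 1), by rw [hdt], h⟩
  have hle := hmin _ ⟨hqviol, hqsu⟩
  simp only [List.length_cons, List.length_drop] at hle
  omega
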